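/- For any real N×T matrix A of rank at most K, the nuclear norm of A equals the infimum over all factorizations A = B Fᵀ with B an N×K matrix and F a T×K matrix of (1/2)‖B‖_F² + (1/2)‖F‖_F². -/

import Mathlib

open Matrix


lemma dot_self_nonneg' {n : Type*} [Fintype n] (x : n → ℝ) : 0 ≤ x ⬝ᵥ x :=
  Finset.sum_nonneg fun i _ => mul_self_nonneg _

lemma sum_dot' {ι n : Type*} [Fintype n] (s : Finset ι) (f : ι → n → ℝ) (x : n → ℝ) :
    (∑ i ∈ s, f i) ⬝ᵥ x = ∑ i ∈ s, f i ⬝ᵥ x := by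
  simp only [dotProduct, Finset.sum_apply, Finset.sum_mul]
  exact Finset.sum_comm

lemma dot_sum' {ι n : Type*} [Fintype n] (s : Finset ι) (x : n → ℝ) (f : ι → n → ℝ) :
    x ⬝ᵥ (∑ i ∈ s, f i) = ∑ i ∈ s, x ⬝ᵥ f i := by
  rw [dotProduct_comm, sum_dot']
  exact Finset.sum_congr rfl fun i _ => dotProduct_comm _ _

lemma half_dot' {n : Type*} [Fintype n] (x y : n → ℝ) :
    x ⬝ᵥ y ≤ 1/2 * (x ⬝ᵥ x) + 1/2 * (y ⬝ᵥ y) := by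
  have h0 := dot_self_nonneg' (x - y)
  rw [sub_dotProduct, dotProduct_sub, dotProduct_sub,
    dotProduct_comm y x] at h0
  linarith

lemma bessel' {ι n : Type*} [Fintype n] [DecidableEq ι] (s : Finset ι) (u : ι → n → ℝ)
    (h : ∀ i ∈ s, ∀ j ∈ s, u i ⬝ᵥ u j = if i = j then 1 else 0) (c : n → ℝ) :
    ∑ i ∈ s, (c ⬝ᵥ u i) ^ 2 ≤ c ⬝ᵥ c := by
  set d : n → ℝ := c - ∑ i ∈ s, (c ⬝ᵥ u i) • u i with hd
  have hdu : ∀ i ∈ s, d ⬝ᵥ u i = 0 := by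
    intro i hi
    rw [hd, sub_dotProduct, sum_dot']
    have he : ∀ j ∈ s, ((c ⬝ᵥ u j) • u j) ⬝ᵥ u i = if j = i then c ⬝ᵥ u i else 0 := by
      intro j hj
      rw [smul_dotProduct, h j hj i hi]
      by_cases hji : j = i <;> simp [hji]
    rw [Finset.sum_congr rfl he, Finset.sum_ite_eq' s i (fun _ => c ⬝ᵥ u i), if_pos hi, sub_self]
  have h2 : d ⬝ᵥ (∑ i ∈ s, (c ⬝ᵥ u i) • u i) = 0 := by
    rw [dot_sum']
    refine Finset.sum_eq_zero fun i hi => ?_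
    rw [dotProduct_smul, hdu i hi, smul_zero]
  have h1 : d ⬝ᵥ d = d ⬝ᵥ c := by
    have h3 := dotProduct_sub d c (∑ i ∈ s, (c ⬝ᵥ u i) • u i)
    rw [← hd, h2, sub_zero] at h3
    exact h3
  have h4 : d ⬝ᵥ c = c ⬝ᵥ c - ∑ i ∈ s, (c ⬝ᵥ u i) ^ 2 := by
    rw [hd, sub_dotProduct, sum_dot']
    congr 1
    refine Finset.sum_congr rfl fun i _ => ?_
    rw [smul_dotProduct, dotProduct_comm (u i) c, smul_eq_mul, sq]
  have h0 := dot_self_nonneg' d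
  rw [h1, h4] at h0
  linarith


lemma cross' {K : ℕ} {α : Type*} [DecidableEq α] (g : α → Fin K) (hg : Function.Injective g)
    (i i' : α) (x y : ℝ) :
    (∑ k : Fin K, (if g i = k then x else 0) * (if g i' = k then y else 0))
      = if i = i' then x * y else 0 := by
  rw [Finset.sum_eq_single (g i)]
  · by_cases h : i = i'
    · subst h; simp
    · rw [if_neg h, if_pos rfl, if_neg (fun hh => h (hg hh).symm), mul_zero]
  · intro k _ hk
    rw [if_neg (Ne.symm hk), zero_mul]
  · intro h; exact absurd (Finset.mem_univ _) h

lemma colsum' {K : ℕ} {α : Type*} [DecidableEq α] (t : Finset α) (g : α → Fin K)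
    (hg : Function.Injective g) (p q : α → ℝ) :
    (∑ k : Fin K, (∑ i ∈ t, if g i = k then p i else 0) * (∑ i ∈ t, if g i = k then q i else 0))
      = ∑ i ∈ t, p i * q i := by
  calc (∑ k : Fin K, (∑ i ∈ t, if g i = k then p i else 0) *
          (∑ i ∈ t, if g i = k then q i else 0))
      = ∑ k : Fin K, ∑ i ∈ t, ∑ i' ∈ t,
          (if g i = k then p i else 0) * (if g i' = k then q i' else 0) := by
        refine Finset.sum_congr rfl fun k _ => ?_
        rw [Finset.sum_mul]
        exact Finset.sum_congr rfl fun i _ => Finset.mul_sum _ _ _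
    _ = ∑ i ∈ t, ∑ i' ∈ t, ∑ k : Fin K,
          (if g i = k then p i else 0) * (if g i' = k then q i' else 0) := by
        rw [Finset.sum_comm]
        exact Finset.sum_congr rfl fun i _ => Finset.sum_comm
    _ = ∑ i ∈ t, ∑ i' ∈ t, if i = i' then p i * q i' else 0 := by
        refine Finset.sum_congr rfl fun i _ => Finset.sum_congr rfl fun i' _ => ?_
        exact cross' g hg i i' (p i) (q i')
    _ = ∑ i ∈ t, p i * q i := by
        refine Finset.sum_congr rfl fun i hi => ?_
        rw [Finset.sum_ite_eq t i (fun i' => p i * q i'), if_pos hi]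

noncomputable def frobNorm {m n : Type*} [Fintype m] [Fintype n] (A : Matrix m n ℝ) : ℝ :=
  Real.sqrt (∑ i, ∑ j, (A i j) ^ 2)

/-- The nuclear norm of a real matrix: the sum of its singular values, i.e. the sum of the
square roots of the eigenvalues of `Aᴴ * A`. -/
noncomputable def nuclearNorm {m n : Type*} [Fintype m] [Fintype n] [DecidableEq n]
    (A : Matrix m n ℝ) : ℝ :=
  ∑ i, Real.sqrt ((show (Aᵀ * A).IsHermitian by
    simpa using Matrix.isHermitian_conjTranspose_mul_self A).eigenvalues i)

/-- The nuclear norm of an `N × T` matrix of rank at most `K` equals the infimum of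
`½‖B‖_F² + ½‖F‖_F²` over all factorizations `A = B Fᵀ` with `B : N × K`, `F : T × K`. -/
theorem stmt0 {N T K : ℕ} (A : Matrix (Fin N) (Fin T) ℝ) (hrank : A.rank ≤ K) :
    nuclearNorm A =
      sInf {x : ℝ | ∃ (B : Matrix (Fin N) (Fin K) ℝ) (F : Matrix (Fin T) (Fin K) ℝ),
        B * Fᵀ = A ∧ x = (1 / 2) * frobNorm B ^ 2 + (1 / 2) * frobNorm F ^ 2} := by
  have hM : (Aᴴ * A).IsHermitian := Matrix.isHermitian_conjTranspose_mul_self A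
  set lam : Fin T → ℝ := hM.eigenvalues with hlamdef
  set V : Matrix (Fin T) (Fin T) ℝ := (hM.eigenvectorUnitary : Matrix (Fin T) (Fin T) ℝ) with hVdef
  set v : Fin T → Fin T → ℝ := fun i j => V j i with hvdef
  have hVV : star V * V = 1 := Matrix.mem_unitaryGroup_iff'.mp hM.eigenvectorUnitary.2
  have hVV' : V * star V = 1 := Matrix.mem_unitaryGroup_iff.mp hM.eigenvectorUnitary.2
  have horth : ∀ i j, v i ⬝ᵥ v j = if i = j then 1 else 0 := by
    intro i j
    have h := congrFun (congrFun hVV i) j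
    simpa [Matrix.mul_apply, Matrix.one_apply, dotProduct] using h
  have hcomp : ∀ j t, (∑ i, v i j * v i t) = if j = t then 1 else 0 := by
    intro j t
    have h := congrFun (congrFun hVV' j) t
    simpa [Matrix.mul_apply, Matrix.one_apply] using h
  have hspec : (Aᴴ * A) * V = V * diagonal lam := by
    have h := hM.spectral_theorem
    have h2 : (RCLike.ofReal ∘ lam : Fin T → ℝ) = lam := by funext i; simp
    conv_lhs => rw [h]
    rw [h2, Unitary.conjStarAlgAut_apply, mul_assoc, mul_assoc, hVV, mul_one]
  have hMv : ∀ i, (Aᴴ * A) *ᵥ v i = lam i • v i := by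
    intro i
    funext j
    have h := congrFun (congrFun hspec j) i
    rw [Matrix.mul_diagonal] at h
    rw [Matrix.mul_apply] at h
    simp only [Matrix.mulVec, dotProduct, Pi.smul_apply, smul_eq_mul]
    rw [h, mul_comm]
  have hAvAv : ∀ i j, (A *ᵥ v i) ⬝ᵥ (A *ᵥ v j) = if i = j then lam j else 0 := by
    intro i j
    have hvA : v i ᵥ* Aᴴ = A *ᵥ v i := by
      funext l
      simp [Matrix.vecMul, Matrix.mulVec, dotProduct, Matrix.conjTranspose_apply, mul_comm]
    have h1 : v i ⬝ᵥ ((Aᴴ * A) *ᵥ v j) = (A *ᵥ v i) ⬝ᵥ (A *ᵥ v j) := by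
      rw [← Matrix.mulVec_mulVec, Matrix.dotProduct_mulVec, hvA]
    rw [← h1, hMv j, dotProduct_smul, smul_eq_mul, horth i j]
    by_cases h : i = j <;> simp [h]
  have hlam0 : ∀ i, 0 ≤ lam i := fun i =>
    (Matrix.posSemidef_conjTranspose_mul_self A).eigenvalues_nonneg i
  set σ : Fin T → ℝ := fun i => Real.sqrt (lam i) with hσdef
  have hσ0 : ∀ i, 0 ≤ σ i := fun i => Real.sqrt_nonneg _
  have hσsq : ∀ i, σ i ^ 2 = lam i := fun i => Real.sq_sqrt (hlam0 i)
  set s : Finset (Fin T) := Finset.univ.filter (fun i => lam i ≠ 0) with hsdef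
  have hσpos : ∀ i ∈ s, 0 < σ i := by
    intro i hi
    rw [hsdef, Finset.mem_filter] at hi
    exact Real.sqrt_pos.mpr (lt_of_le_of_ne (hlam0 i) (Ne.symm hi.2))
  have hσzero : ∀ i ∉ s, σ i = 0 := by
    intro i hi
    rw [hsdef, Finset.mem_filter] at hi
    push_neg at hi
    rw [hσdef]
    simp [hi (Finset.mem_univ i)]
  have hAv0 : ∀ i ∉ s, A *ᵥ v i = 0 := by
    intro i hi
    rw [← dotProduct_self_eq_zero (v := A *ᵥ v i), hAvAv i i, if_pos rfl]
    rw [hsdef, Finset.mem_filter] at hi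
    push_neg at hi
    exact hi (Finset.mem_univ i)
  have hcard : s.card ≤ K := by
    have h1 := hM.rank_eq_card_non_zero_eigs
    rw [Matrix.rank_conjTranspose_mul_self, ← hlamdef] at h1
    have h2 : Fintype.card {i // lam i ≠ 0} = s.card := Fintype.card_subtype _
    omega
  have hfroB : ∀ (B : Matrix (Fin N) (Fin K) ℝ), frobNorm B ^ 2 = ∑ j, ∑ k, B j k ^ 2 :=
    fun B => Real.sq_sqrt (Finset.sum_nonneg fun _ _ => Finset.sum_nonneg fun _ _ => sq_nonneg _)
  have hfroF : ∀ (F : Matrix (Fin T) (Fin K) ℝ), frobNorm F ^ 2 = ∑ t, ∑ k, F t k ^ 2 :=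
    fun F => Real.sq_sqrt (Finset.sum_nonneg fun _ _ => Finset.sum_nonneg fun _ _ => sq_nonneg _)
  have hnn : nuclearNorm A = ∑ i ∈ s, σ i := by
    have h1 : nuclearNorm A = ∑ i, σ i := rfl
    rw [h1]
    exact (Finset.sum_subset (Finset.subset_univ s) (fun i _ hi => hσzero i hi)).symm
  have hlow : ∀ (B : Matrix (Fin N) (Fin K) ℝ) (F : Matrix (Fin T) (Fin K) ℝ), B * Fᵀ = A →
      (∑ i ∈ s, σ i) ≤ 1/2 * frobNorm B ^ 2 + 1/2 * frobNorm F ^ 2 := by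
    intro B F hBF
    set u : Fin T → Fin N → ℝ := fun i => (σ i)⁻¹ • (A *ᵥ v i) with hudef
    have huu : ∀ i ∈ s, ∀ j ∈ s, u i ⬝ᵥ u j = if i = j then 1 else 0 := by
      intro i hi j hj
      rw [hudef]
      simp only [smul_dotProduct, dotProduct_smul, smul_eq_mul]
      rw [hAvAv i j]
      by_cases h : i = j
      · subst h
        rw [if_pos rfl, if_pos rfl, ← hσsq i]
        have hpos := hσpos i hi
        field_simp
      · simp [h]
    have hkey : ∀ i ∈ s, σ i = (Bᵀ *ᵥ u i) ⬝ᵥ (Fᵀ *ᵥ v i) := by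
      intro i hi
      have h1 : (Bᵀ *ᵥ u i) ⬝ᵥ (Fᵀ *ᵥ v i) = u i ⬝ᵥ ((B * Fᵀ) *ᵥ v i) := by
        rw [Matrix.mulVec_transpose B (u i), ← Matrix.dotProduct_mulVec, Matrix.mulVec_mulVec]
      rw [h1, hBF, hudef]
      simp only [smul_dotProduct, smul_eq_mul]
      rw [hAvAv i i, if_pos rfl, ← hσsq i]
      have hpos := hσpos i hi
      field_simp
    have hB : (∑ i ∈ s, (Bᵀ *ᵥ u i) ⬝ᵥ (Bᵀ *ᵥ u i)) ≤ frobNorm B ^ 2 := by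
      rw [hfroB B]
      have h1 : ∀ i, (Bᵀ *ᵥ u i) ⬝ᵥ (Bᵀ *ᵥ u i) = ∑ k, ((fun j => B j k) ⬝ᵥ u i) ^ 2 := by
        intro i
        simp [Matrix.mulVec, dotProduct, Matrix.transpose_apply, sq]
      rw [Finset.sum_congr rfl (fun i _ => h1 i), Finset.sum_comm,
        show (∑ j, ∑ k, B j k ^ 2) = ∑ k, ∑ j, B j k ^ 2 from Finset.sum_comm]
      refine Finset.sum_le_sum fun k _ => ?_
      calc ∑ i ∈ s, ((fun j => B j k) ⬝ᵥ u i) ^ 2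
          ≤ (fun j => B j k) ⬝ᵥ (fun j => B j k) := bessel' s u huu _
        _ = ∑ j, B j k ^ 2 := by simp [dotProduct, sq]
    have hF : (∑ i ∈ s, (Fᵀ *ᵥ v i) ⬝ᵥ (Fᵀ *ᵥ v i)) ≤ frobNorm F ^ 2 := by
      rw [hfroF F]
      have h1 : ∀ i, (Fᵀ *ᵥ v i) ⬝ᵥ (Fᵀ *ᵥ v i) = ∑ k, ((fun t => F t k) ⬝ᵥ v i) ^ 2 := by
        intro i
        simp [Matrix.mulVec, dotProduct, Matrix.transpose_apply, sq]
      rw [Finset.sum_congr rfl (fun i _ => h1 i), Finset.sum_comm,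
        show (∑ t, ∑ k, F t k ^ 2) = ∑ k, ∑ t, F t k ^ 2 from Finset.sum_comm]
      refine Finset.sum_le_sum fun k _ => ?_
      calc ∑ i ∈ s, ((fun t => F t k) ⬝ᵥ v i) ^ 2
          ≤ (fun t => F t k) ⬝ᵥ (fun t => F t k) :=
            bessel' s v (fun i _ j _ => horth i j) _
        _ = ∑ t, F t k ^ 2 := by simp [dotProduct, sq]
    calc ∑ i ∈ s, σ i
        ≤ ∑ i ∈ s, (1/2 * ((Bᵀ *ᵥ u i) ⬝ᵥ (Bᵀ *ᵥ u i))
            + 1/2 * ((Fᵀ *ᵥ v i) ⬝ᵥ (Fᵀ *ᵥ v i))) := by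
          refine Finset.sum_le_sum fun i hi => ?_
          rw [hkey i hi]
          exact half_dot' _ _
      _ = 1/2 * (∑ i ∈ s, (Bᵀ *ᵥ u i) ⬝ᵥ (Bᵀ *ᵥ u i))
            + 1/2 * (∑ i ∈ s, (Fᵀ *ᵥ v i) ⬝ᵥ (Fᵀ *ᵥ v i)) := by
          rw [Finset.sum_add_distrib, Finset.mul_sum, Finset.mul_sum]
      _ ≤ 1/2 * frobNorm B ^ 2 + 1/2 * frobNorm F ^ 2 := by linarith
  -- membership: explicit factorization achieving the nuclear norm
  set τ : Fin T → ℝ := fun i => Real.sqrt (σ i) with hτdef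
  have hτsq : ∀ i, τ i ^ 2 = σ i := fun i => Real.sq_sqrt (hσ0 i)
  have hτpos : ∀ i ∈ s, 0 < τ i := fun i hi => Real.sqrt_pos.mpr (hσpos i hi)
  set g : {x // x ∈ s} → Fin K := fun i => Fin.castLE hcard ((s.orderIsoOfFin rfl).symm i)
    with hgdef
  have hg : Function.Injective g := by
    intro a b hab
    have h1 : Function.Injective (Fin.castLE hcard) := Fin.castLE_injective hcard
    exact (s.orderIsoOfFin rfl).symm.injective (h1 hab)
  set bb : {x // x ∈ s} → Fin N → ℝ := fun i j => (τ i.1)⁻¹ * (A *ᵥ v i.1) j with hbbdef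
  set ff : {x // x ∈ s} → Fin T → ℝ := fun i t => τ i.1 * v i.1 t with hffdef
  set B : Matrix (Fin N) (Fin K) ℝ :=
    Matrix.of fun j k => ∑ i ∈ s.attach, if g i = k then bb i j else 0 with hBdef
  set F : Matrix (Fin T) (Fin K) ℝ :=
    Matrix.of fun t k => ∑ i ∈ s.attach, if g i = k then ff i t else 0 with hFdef
  have hBFA : B * Fᵀ = A := by
    ext j t
    rw [Matrix.mul_apply]
    simp only [hBdef, hFdef, Matrix.of_apply, Matrix.transpose_apply]
    rw [colsum' s.attach g hg (fun i => bb i j) (fun i => ff i t)]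
    have h1 : ∀ i ∈ s.attach, bb i j * ff i t = (A *ᵥ v i.1) j * v i.1 t := by
      intro i _
      have hp := hτpos i.1 i.2
      rw [hbbdef, hffdef]
      field_simp
    rw [Finset.sum_congr rfl h1, Finset.sum_attach s (fun i => (A *ᵥ v i) j * v i t),
      Finset.sum_subset (Finset.subset_univ s)
        (fun i _ hi => by rw [hAv0 i hi]; simp)]
    simp only [Matrix.mulVec, dotProduct]
    calc ∑ i, (∑ l, A j l * v i l) * v i t
        = ∑ l, A j l * ∑ i, v i l * v i t := by
          rw [Finset.sum_congr rfl fun i _ => Finset.sum_mul _ _ _, Finset.sum_comm]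
          refine Finset.sum_congr rfl fun l _ => ?_
          rw [Finset.mul_sum]
          exact Finset.sum_congr rfl fun i _ => by ring
      _ = A j t := by
          simp only [fun l => hcomp l t, mul_ite, mul_one, mul_zero]
          rw [Finset.sum_ite_eq' Finset.univ t (fun l => A j l), if_pos (Finset.mem_univ t)]
  have hBsq : frobNorm B ^ 2 = ∑ i ∈ s, σ i := by
    rw [hfroB B]
    calc ∑ j, ∑ k, B j k ^ 2
        = ∑ j, ∑ i ∈ s.attach, bb i j * bb i j := by
          refine Finset.sum_congr rfl fun j _ => ?_
          simp only [hBdef, Matrix.of_apply, sq]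
          exact colsum' s.attach g hg (fun i => bb i j) (fun i => bb i j)
      _ = ∑ i ∈ s.attach, ∑ j, bb i j * bb i j := Finset.sum_comm
      _ = ∑ i ∈ s.attach, σ i.1 := by
          refine Finset.sum_congr rfl fun i _ => ?_
          have h1 : ∑ j, bb i j * bb i j
              = (τ i.1)⁻¹ * (τ i.1)⁻¹ * ((A *ᵥ v i.1) ⬝ᵥ (A *ᵥ v i.1)) := by
            simp only [hbbdef, dotProduct]
            rw [Finset.mul_sum]
            exact Finset.sum_congr rfl fun j _ => by ring
          rw [h1, hAvAv i.1 i.1, if_pos rfl, ← hσsq i.1, ← hτsq i.1]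
          have hp := hτpos i.1 i.2
          field_simp
      _ = ∑ i ∈ s, σ i := Finset.sum_attach s (fun i => σ i)
  have hFsq : frobNorm F ^ 2 = ∑ i ∈ s, σ i := by
    rw [hfroF F]
    calc ∑ t, ∑ k, F t k ^ 2
        = ∑ t, ∑ i ∈ s.attach, ff i t * ff i t := by
          refine Finset.sum_congr rfl fun t _ => ?_
          simp only [hFdef, Matrix.of_apply, sq]
          exact colsum' s.attach g hg (fun i => ff i t) (fun i => ff i t)
      _ = ∑ i ∈ s.attach, ∑ t, ff i t * ff i t := Finset.sum_comm
      _ = ∑ i ∈ s.attach, σ i.1 := by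
          refine Finset.sum_congr rfl fun i _ => ?_
          have h1 : ∑ t, ff i t * ff i t = τ i.1 * τ i.1 * (v i.1 ⬝ᵥ v i.1) := by
            simp only [hffdef, dotProduct]
            rw [Finset.mul_sum]
            exact Finset.sum_congr rfl fun t _ => by ring
          rw [h1, horth i.1 i.1, if_pos rfl, mul_one, ← hτsq i.1]
          ring
      _ = ∑ i ∈ s, σ i := Finset.sum_attach s (fun i => σ i)
  -- conclusion
  have hmem : (∑ i ∈ s, σ i) ∈ {x : ℝ | ∃ (B : Matrix (Fin N) (Fin K) ℝ)
      (F : Matrix (Fin T) (Fin K) ℝ),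
      B * Fᵀ = A ∧ x = (1 / 2) * frobNorm B ^ 2 + (1 / 2) * frobNorm F ^ 2} := by
    exact ⟨B, F, hBFA, by rw [hBsq, hFsq]; ring⟩
  have hbdd : BddBelow {x : ℝ | ∃ (B : Matrix (Fin N) (Fin K) ℝ)
      (F : Matrix (Fin T) (Fin K) ℝ),
      B * Fᵀ = A ∧ x = (1 / 2) * frobNorm B ^ 2 + (1 / 2) * frobNorm F ^ 2} := by
    refine ⟨∑ i ∈ s, σ i, fun x hx => ?_⟩
    obtain ⟨B', F', hBF', hx⟩ := hx
    rw [hx]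
    have := hlow B' F' hBF'
    linarith
  rw [hnn]
  apply le_antisymm
  · apply le_csInf ⟨_, hmem⟩
    rintro x ⟨B', F', hBF', hx⟩
    rw [hx]
    have := hlow B' F' hBF'
    linarith
  · exact csInf_le hbdd hmem
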